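/- Global scaling law for the partitioned-manifold model: let d ≥ 1 be a natural number, let L ≥ 0, let f : ℝ^d → ℝ be L-Lipschitz with respect to the Euclidean norm, and let C be a positive integer. Define r : ℝ^d → ℝ^d by r(x)_i = (⌊C·x_i⌋ + 1/2)/C. Then the average approximation error over the unit cube satisfies ∫_{[0,1]^d} |f(x) − f(r(x))| dx ≤ (L·√d/2)·(C^d)^{−1/d}; that is, the expected error under the uniform distribution on [0,1]^d scales as n^{−1/d} with n = C^d. -/

import Mathlib

/-- The grid-rounding map sending a point to the center of its grid cell:
`r(x)_i = (⌊C·x_i⌋ + 1/2)/C`. -/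
noncomputable def gridRound (d C : ℕ) (x : EuclideanSpace ℝ (Fin d)) :
    EuclideanSpace ℝ (Fin d) :=
  WithLp.toLp 2 (fun i => ((⌊(C : ℝ) * x i⌋ : ℝ) + 1 / 2) / C)

lemma gridRound_dist (d C : ℕ) (hC : 0 < C) (x : EuclideanSpace ℝ (Fin d)) :
    dist x (gridRound d C x) ≤ Real.sqrt d / (2 * C) := by
  have hCpos : (0 : ℝ) < C := by exact_mod_cast hC
  have hcoord : ∀ i, dist (x i) (gridRound d C x i) ≤ 1 / (2 * C) := by
    intro i
    rw [Real.dist_eq]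
    have hfl₁ : (⌊(C : ℝ) * x i⌋ : ℝ) ≤ (C : ℝ) * x i := Int.floor_le _
    have hfl₂ : (C : ℝ) * x i < (⌊(C : ℝ) * x i⌋ : ℝ) + 1 := Int.lt_floor_add_one _
    have : |(C : ℝ) * x i - ((⌊(C : ℝ) * x i⌋ : ℝ) + 1 / 2)| ≤ 1 / 2 := by
      rw [abs_le]; constructor <;> linarith
    have h2 : |x i - gridRound d C x i| = |(C : ℝ) * x i - ((⌊(C : ℝ) * x i⌋ : ℝ) + 1 / 2)| / C := by
      rw [← abs_of_pos hCpos, ← abs_div]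
      congr 1
      simp only [gridRound, WithLp.ofLp_toLp, abs_of_pos hCpos]
      field_simp [gridRound]
    rw [h2]
    rw [div_le_div_iff₀ hCpos (by positivity)]
    calc |(C : ℝ) * x i - ((⌊(C : ℝ) * x i⌋ : ℝ) + 1 / 2)| * (2 * C)
        ≤ (1 / 2) * (2 * C) := by
          apply mul_le_mul_of_nonneg_right this (by positivity)
      _ = 1 * C := by ring
  have hd : dist x (gridRound d C x) ≤ Real.sqrt (d * (1 / (2 * C)) ^ 2) := by
    rw [EuclideanSpace.dist_eq]
    apply Real.sqrt_le_sqrt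
    calc ∑ i, dist (x i) (gridRound d C x i) ^ 2
        ≤ ∑ _i : Fin d, (1 / (2 * (C:ℝ))) ^ 2 := by
          apply Finset.sum_le_sum
          intro i _
          exact pow_le_pow_left₀ dist_nonneg (hcoord i) 2
      _ = d * (1 / (2 * (C:ℝ))) ^ 2 := by rw [Finset.sum_const]; simp [mul_comm]
  calc dist x (gridRound d C x) ≤ Real.sqrt (d * (1 / (2 * C)) ^ 2) := hd
    _ = Real.sqrt d * (1 / (2 * C)) := by
        rw [Real.sqrt_mul (by positivity), Real.sqrt_sq (by positivity)]
    _ = Real.sqrt d / (2 * C) := by ring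

/-- Global scaling law for the partitioned-manifold model: if `f` is `L`-Lipschitz
w.r.t. the Euclidean norm, then the average approximation error over the unit cube
satisfies `∫_{[0,1]^d} |f(x) − f(r(x))| dx ≤ (L·√d/2)·(C^d)^{−1/d}`. -/
theorem global_scaling_law (d : ℕ) (hd : 1 ≤ d) (L : ℝ) (hL : 0 ≤ L)
    (f : EuclideanSpace ℝ (Fin d) → ℝ)
    (hf : ∀ x y : EuclideanSpace ℝ (Fin d), |f x - f y| ≤ L * dist x y)
    (C : ℕ) (hC : 0 < C) :
    ∫ x in {x : EuclideanSpace ℝ (Fin d) | ∀ i, x i ∈ Set.Icc (0 : ℝ) 1},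
        |f x - f (gridRound d C x)| ≤
      (L * Real.sqrt d / 2) * (((C : ℝ) ^ d) ^ (-(1 : ℝ) / d)) := by
  have hCpos : (0 : ℝ) < C := by exact_mod_cast hC
  have hdpos : (0 : ℝ) < d := by exact_mod_cast hd
  -- RHS simplification
  have hrpow : (((C : ℝ) ^ d) ^ (-(1 : ℝ) / d)) = 1 / C := by
    rw [← Real.rpow_natCast (C : ℝ) d, ← Real.rpow_mul hCpos.le]
    have : (d : ℝ) * (-(1 : ℝ) / d) = -1 := by field_simp
    rw [this, Real.rpow_neg_one]
    simp
  set s : Set (EuclideanSpace ℝ (Fin d)) :=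
    {x | ∀ i, x i ∈ Set.Icc (0 : ℝ) 1} with hs
  have hsm : MeasurableSet s := by
    have : s = (⇑((MeasurableEquiv.toLp 2 (Fin d → ℝ)).symm)) ⁻¹'
        (Set.univ.pi fun _ => Set.Icc (0 : ℝ) 1) := by
      ext x; simp only [Set.mem_preimage, Set.mem_pi, Set.mem_univ, forall_true_left, MeasurableEquiv.coe_mk, Equiv.coe_fn_mk]; rfl
    rw [this]
    exact (MeasurableEquiv.measurable _) (MeasurableSet.univ_pi fun _ => measurableSet_Icc)
  have hvol : MeasureTheory.volume s = 1 := by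
    have hpre : s = (⇑((MeasurableEquiv.toLp 2 (Fin d → ℝ)).symm)) ⁻¹'
        (Set.univ.pi fun _ => Set.Icc (0 : ℝ) 1) := by
      ext x; simp only [Set.mem_preimage, Set.mem_pi, Set.mem_univ, forall_true_left, MeasurableEquiv.coe_mk, Equiv.coe_fn_mk]; rfl
    rw [hpre, (EuclideanSpace.volume_preserving_symm_measurableEquiv_toLp (Fin d)).measure_preimage
      (MeasurableSet.univ_pi fun _ => measurableSet_Icc).nullMeasurableSet]
    rw [MeasureTheory.volume_pi_pi]; simp
  have hbound : ∀ x ∈ s, ‖|f x - f (gridRound d C x)|‖ ≤ L * (Real.sqrt d / (2 * C)) := by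
    intro x _
    rw [Real.norm_eq_abs, abs_abs]
    exact le_trans (hf x _) (mul_le_mul_of_nonneg_left (gridRound_dist d C hC x) hL)
  have key := MeasureTheory.norm_setIntegral_le_of_norm_le_const
    (μ := MeasureTheory.volume) (f := fun x => |f x - f (gridRound d C x)|)
    (by rw [hvol]; exact ENNReal.one_lt_top) hbound
  rw [MeasureTheory.measureReal_def, hvol] at key
  simp only [ENNReal.toReal_one, mul_one] at key
  calc ∫ x in s, |f x - f (gridRound d C x)|
      ≤ ‖∫ x in s, |f x - f (gridRound d C x)|‖ := le_abs_self _
    _ ≤ L * (Real.sqrt d / (2 * C)) := key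
    _ = (L * Real.sqrt d / 2) * (((C : ℝ) ^ d) ^ (-(1 : ℝ) / d)) := by
        rw [hrpow]; ring
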